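/- Let G = (V, E) be a finite graph with n vertices and m edges, M = m + 1, and L the loss defined by L(β) = M·Σ_j(|β_j|_2 + |β_j − 1|_2) + Σ_{(u,v)∈E}|β_u + β_v − 1|_2 for β : V → ℚ. Then min over s ∈ {0,1}^V of L(s) equals M·n + m − maxcut(G), where maxcut(G) is the maximum over all 2-colorings s of the number of bichromatic edges. -/
import Mathlib


theorem stmt_10 (V : Type) [Fintype V] [DecidableEq V] (E : Finset (V × V))
    (M : ℝ) (hM : M = E.card + 1)
    (L : (V → ℚ) → ℝ)
    (hL : ∀ β, L β =
      M * ∑ j : V, (((padicNorm 2 (β j) : ℚ) : ℝ) + ((padicNorm 2 (β j - 1) : ℚ) : ℝ)) +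
        ∑ e ∈ E, ((padicNorm 2 (β e.1 + β e.2 - 1) : ℚ) : ℝ)) :
    Finset.univ.inf' Finset.univ_nonempty
        (fun s : V → Bool => L (fun j => if s j then 1 else 0)) =
      M * (Fintype.card V) + E.card -
        Finset.univ.sup' Finset.univ_nonempty
          (fun s : V → Bool => ((E.filter (fun e => s e.1 ≠ s e.2)).card : ℝ)) := by
  set g : (V → Bool) → ℝ := fun s => ((E.filter (fun e => s e.1 ≠ s e.2)).card : ℝ) with hg
  have key : ∀ s : V → Bool,
      L (fun j => if s j then 1 else 0) = M * (Fintype.card V) + (E.card : ℝ) - g s := by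
    intro s
    rw [hL]
    have h1 : ∑ j : V, (((padicNorm 2 ((fun j => if s j then (1:ℚ) else 0) j) : ℚ) : ℝ)
        + ((padicNorm 2 ((fun j => if s j then (1:ℚ) else 0) j - 1) : ℚ) : ℝ))
        = (Fintype.card V : ℝ) := by
      rw [Finset.sum_congr rfl (fun j _ => ?_), Finset.sum_const, Finset.card_univ,
        nsmul_eq_mul, mul_one]
      by_cases h : s j <;> simp [h, padicNorm]
    have h2 : ∑ e ∈ E, ((padicNorm 2 ((fun j => if s j then (1:ℚ) else 0) e.1
        + (fun j => if s j then (1:ℚ) else 0) e.2 - 1) : ℚ) : ℝ)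
        = (E.card : ℝ) - g s := by
      have : ∀ e ∈ E, ((padicNorm 2 ((fun j => if s j then (1:ℚ) else 0) e.1
          + (fun j => if s j then (1:ℚ) else 0) e.2 - 1) : ℚ) : ℝ)
          = if s e.1 ≠ s e.2 then 0 else 1 := by
        intro e _
        by_cases h1 : s e.1 <;> by_cases h2 : s e.2 <;>
          simp [h1, h2, padicNorm] <;> norm_num
      rw [Finset.sum_congr rfl this, Finset.sum_ite, Finset.sum_const, Finset.sum_const]
      simp only [smul_zero, nsmul_eq_mul, mul_one, zero_add, hg]
      have := Finset.card_filter_add_card_filter_not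
        (s := E) (p := fun e => s e.1 ≠ s e.2)
      push_neg at this ⊢
      have h3 : (E.filter (fun e => s e.1 = s e.2)).card
          = E.card - (E.filter (fun e => s e.1 ≠ s e.2)).card := by omega
      rw [h3]
      exact Nat.cast_sub (Finset.card_filter_le E _)
    rw [h1, h2]
    ring
  apply le_antisymm
  · obtain ⟨s0, _, hs0⟩ := Finset.exists_mem_eq_sup' (Finset.univ_nonempty (α := V → Bool)) g
    calc Finset.univ.inf' Finset.univ_nonempty
          (fun s : V → Bool => L (fun j => if s j then 1 else 0))
        ≤ L (fun j => if s0 j then 1 else 0) :=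
          Finset.inf'_le _ (Finset.mem_univ s0)
      _ = M * (Fintype.card V) + (E.card : ℝ) - g s0 := key s0
      _ = _ := by rw [← hs0]
  · apply Finset.le_inf'
    intro s _
    rw [key s]
    have : g s ≤ Finset.univ.sup' Finset.univ_nonempty g :=
      Finset.le_sup' g (Finset.mem_univ s)
    linarith
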